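/- Let u and v be reduced words over X with u ≠ v⁻¹, and set g := u * v (the cyclically reduced product). Then one of the following three cases holds: (1) there exist words u₁, a, s such that u = u₁a, v = a⁻¹ s g s⁻¹ u₁⁻¹, and ρ(uv) = u₁ s g s⁻¹ u₁⁻¹; (2) there exist non-empty words c₁, c₂ and words t, a such that g = c₁c₂, u = t c₁ a, v = a⁻¹ c₂ t⁻¹, ρ(uv) = t c₁c₂ t⁻¹, ρ(vu) = a⁻¹ c₂c₁ a, and v * u = c₂c₁; (3) there exist words v₁, s, a such that u = v₁⁻¹ s g s⁻¹ a, v = a⁻¹ v₁, and ρ(uv) = v₁⁻¹ s g s⁻¹ v₁. -/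

import Mathlib

/-- Words over `X ∪ X⁻¹`: elements of the free monoid on `α × Bool`. -/
abbrev Word (α : Type*) := List (α × Bool)

/-- The formal inverse of a word. -/
def wInv {α : Type*} (w : Word α) : Word α := FreeGroup.invRev w

/-- `u` is a cyclic permutation of `v`. -/
def IsCycPerm {α : Type*} (u v : Word α) : Prop :=
  ∃ a b : Word α, v = a ++ b ∧ u = b ++ a

variable {α : Type*} [DecidableEq α]

/-- A word is reduced if it is fixed by free reduction. -/
def Reduced (w : Word α) : Prop := FreeGroup.reduce w = w

/-- Auxiliary, fuelled computation of the cyclically reduced form of a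
reduced word: repeatedly peel off a first letter that is inverse to the
last letter. -/
def cyclicReduceAux : ℕ → Word α → Word α
  | 0, w => w
  | n + 1, [] => []
  | n + 1, x :: xs =>
      if xs.getLast? = some (x.1, !x.2) then cyclicReduceAux n xs.dropLast
      else x :: xs

/-- The cyclically reduced form `ρ̂(w)` of a word `w`. -/
def cyclicReduce (w : Word α) : Word α :=
  cyclicReduceAux w.length (FreeGroup.reduce w)

/-- The cyclically reduced product `u * v := ρ̂(uv)`. -/
def crp (u v : Word α) : Word α := cyclicReduce (u ++ v)

set_option linter.unusedSectionVars false
set_option maxHeartbeats 1000000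

/-- no adjacent inverse pair -/
def NR (x y : α × Bool) : Prop := y ≠ (x.1, !x.2)

set_option linter.unusedSectionVars false

lemma NR.flip {x y : α × Bool} (h : NR x y) : NR y x := by
  rintro rfl
  exact h (by simp)

lemma wInv_nil : wInv ([] : Word α) = [] := rfl
lemma wInv_cons (x : α × Bool) (s : Word α) :
    wInv (x :: s) = wInv s ++ [(x.1, !x.2)] := by
  simp [wInv, FreeGroup.invRev]
lemma wInv_append (s t : Word α) : wInv (s ++ t) = wInv t ++ wInv s := by
  simp [wInv, FreeGroup.invRev]
lemma wInv_wInv (s : Word α) : wInv (wInv s) = s := FreeGroup.invRev_invRev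
lemma wInv_length (s : Word α) : (wInv s).length = s.length := by
  simp [wInv, FreeGroup.invRev]

lemma chain'_reduce (L : Word α) : List.Chain' NR (FreeGroup.reduce L) := by
  apply List.isChain_iff_getElem.2
  intro i h hy
  set l := FreeGroup.reduce L with hl
  have h1 : i < l.length := by omega
  have h2 : i + 1 < l.length := by omega
  have hsplit : l = l.take i ++ l[i] :: l[i+1] :: l.drop (i+2) := by
    conv_lhs => rw [← List.take_append_drop i l]
    rw [List.drop_eq_getElem_cons h1, List.drop_eq_getElem_cons h2]
  have hx : l[i+1] = (l[i].1, !l[i].2) := by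
    simpa using hy
  rw [hx] at hsplit
  have hsplit' : FreeGroup.reduce L =
      l.take i ++ (l[i].1, l[i].2) :: (l[i].1, !l[i].2) :: l.drop (i+2) := by
    rw [← hl]; simpa using hsplit
  exact FreeGroup.reduce.not hsplit'

lemma reduced_iff_chain {w : Word α} : Reduced w ↔ List.Chain' NR w := by
  constructor
  · intro h; rw [Reduced] at h; rw [← h]; exact chain'_reduce w
  · intro h
    induction w with
    | nil => rfl
    | cons x xs ih =>
      have hxs : FreeGroup.reduce xs = xs := ih (List.isChain_cons.1 h).2
      show FreeGroup.reduce (x :: xs) = x :: xs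
      rw [FreeGroup.reduce.cons, hxs]
      cases xs with
      | nil => rfl
      | cons y ys =>
        have hr : NR x y := (List.isChain_cons_cons.1 h).1
        have : ¬ (x.1 = y.1 ∧ x.2 = !y.2) := by
          rintro ⟨h1, h2⟩
          exact hr.flip (by cases x; cases y; simp_all)
        simp [this]

lemma chain'_of_reduced {w : Word α} (h : Reduced w) : List.Chain' NR w :=
  reduced_iff_chain.1 h

lemma reduce_of_chain {w : Word α} (h : List.Chain' NR w) : FreeGroup.reduce w = w :=
  reduced_iff_chain.2 h

lemma reduce_cancel (p t q : Word α) :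
    FreeGroup.reduce (p ++ wInv t ++ t ++ q) = FreeGroup.reduce (p ++ q) := by
  induction t with
  | nil => simp [wInv_nil]
  | cons x t' ih =>
    have hstep : FreeGroup.Red.Step (p ++ wInv (x :: t') ++ (x :: t') ++ q)
        ((p ++ wInv t') ++ (t' ++ q)) := by
      have : p ++ wInv (x :: t') ++ (x :: t') ++ q =
          (p ++ wInv t') ++ (x.1, !x.2) :: (x.1, !(!x.2)) :: (t' ++ q) := by
        rw [wInv_cons]; simp
      rw [this]
      exact FreeGroup.Red.Step.not
    rw [FreeGroup.reduce.Step.eq hstep]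
    simpa using ih

lemma cancel (u : Word α) : ∀ v : Word α, List.Chain' NR u → List.Chain' NR v →
    ∃ u₁ a v₂ : Word α, u = u₁ ++ a ∧ v = wInv a ++ v₂ ∧
      FreeGroup.reduce (u ++ v) = u₁ ++ v₂ := by
  induction u using List.reverseRecOn with
  | nil =>
    intro v _ hv
    exact ⟨[], [], v, by simp [wInv_nil], by simp [wInv_nil], by simpa using reduce_of_chain hv⟩
  | append_singleton u' x ih =>
    intro v hu hv
    by_cases hcase : v.head? = some (x.1, !x.2)
    · obtain ⟨v', rfl⟩ : ∃ v', v = (x.1, !x.2) :: v' := by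
        cases v with
        | nil => simp at hcase
        | cons y ys =>
            simp only [List.head?_cons, Option.some.injEq] at hcase
            exact ⟨ys, by rw [hcase]⟩
      have hstep : FreeGroup.Red.Step ((u' ++ [x]) ++ ((x.1, !x.2) :: v')) (u' ++ v') := by
        have : (u' ++ [x]) ++ ((x.1, !x.2) :: v') = u' ++ (x.1, x.2) :: (x.1, !x.2) :: v' := by
          simp
        rw [this]
        exact FreeGroup.Red.Step.not
      obtain ⟨u₁, a', v₂, h1, h2, h3⟩ := ih v' (hu.prefix (by simp)) (List.isChain_cons.1 hv).2
      refine ⟨u₁, a' ++ [x], v₂, by rw [h1]; simp, ?_, ?_⟩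
      · rw [wInv_append, h2]; simp [wInv_cons, wInv_nil]
      · rw [FreeGroup.reduce.Step.eq hstep, h3]
    · refine ⟨u' ++ [x], [], v, by simp, by simp [wInv_nil], ?_⟩
      apply reduce_of_chain
      apply hu.append hv
      intro z hz y hy
      simp at hz
      subst hz
      intro hzy
      exact hcase (by rw [hy] at *; simp_all)

/-- cyclically reduced condition: first letter is not cancelled by last. -/
def CycRed (g : Word α) : Prop := ∀ x xs, g = x :: xs → xs.getLast? ≠ some (x.1, !x.2)

lemma aux_eq : ∀ (s : Word α) (g : Word α) (n : ℕ),
    List.Chain' NR (s ++ g ++ wInv s) → CycRed g → (s ++ g ++ wInv s).length ≤ n →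
    cyclicReduceAux n (s ++ g ++ wInv s) = g := by
  intro s
  induction s with
  | nil =>
    intro g n _ hg _
    simp only [List.nil_append, wInv_nil, List.append_nil]
    match n, g with
    | 0, g => rfl
    | n + 1, [] => rfl
    | n + 1, x :: xs =>
      simp only [cyclicReduceAux]
      rw [if_neg (hg x xs rfl)]
  | cons x s' ih =>
    intro g n hch hg hlen
    have hw : s' ++ g ++ wInv s' ≠ [] ∨ True := Or.inr trivial
    rw [wInv_cons]
    have hshape : (x :: s') ++ g ++ (wInv s' ++ [(x.1, !x.2)]) =
        x :: ((s' ++ g ++ wInv s') ++ [(x.1, !x.2)]) := by simp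
    rw [hshape]
    match n with
    | 0 =>
      exfalso
      simp [wInv_cons] at hlen
    | n + 1 =>
      simp only [cyclicReduceAux]
      rw [if_pos List.getLast?_concat, List.dropLast_concat]
      apply ih g n
      · apply hch.infix
        refine ⟨[x], [(x.1, !x.2)], ?_⟩
        rw [wInv_cons]; simp
      · exact hg
      · simp only [wInv_cons, List.length_cons, List.length_append,
          List.length_singleton] at hlen ⊢
        omega

lemma decomp : ∀ (n : ℕ) (w : Word α), w.length ≤ n → List.Chain' NR w →
    ∃ s g, w = s ++ g ++ wInv s ∧ CycRed g := by
  intro n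
  induction n with
  | zero =>
    intro w hw _
    rw [List.length_eq_zero_iff.1 (Nat.le_zero.1 hw)]
    exact ⟨[], [], by simp [wInv_nil], by rintro x xs ⟨⟩⟩
  | succ n ih =>
    intro w hw hch
    match w with
    | [] => exact ⟨[], [], by simp [wInv_nil], by rintro x xs ⟨⟩⟩
    | x :: xs =>
      by_cases h : xs.getLast? = some (x.1, !x.2)
      · have hxs : xs ≠ [] := by rintro rfl; simp at h
        have hxs2 : xs = xs.dropLast ++ [(x.1, !x.2)] := by
          conv_lhs => rw [← List.dropLast_append_getLast hxs]
          rw [List.getLast?_eq_getLast hxs, Option.some.injEq] at h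
          rw [h]
        obtain ⟨s', g, hdec, hg⟩ := ih xs.dropLast
          (by have := List.length_dropLast (xs := xs); simp at hw ⊢; omega)
          (hch.infix ⟨[x], [(x.1, !x.2)], by rw [List.append_assoc, ← hxs2]; rfl⟩)
        refine ⟨x :: s', g, ?_, hg⟩
        rw [wInv_cons]
        conv_lhs => rw [hxs2]
        rw [hdec]
        simp
      · exact ⟨[], x :: xs, by simp [wInv_nil], by rintro y ys ⟨⟩; exact h⟩

lemma crp_eq {u v w s g : Word α} (hred : FreeGroup.reduce (u ++ v) = w)
    (hdec : w = s ++ g ++ wInv s) (hg : CycRed g) : crp u v = g := by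
  unfold crp cyclicReduce
  rw [hred, hdec]
  apply aux_eq
  · rw [← hdec, ← hred]; exact chain'_reduce _
  · exact hg
  · rw [← hdec, ← hred]
    exact FreeGroup.Red.length_le FreeGroup.reduce.red

theorem shirv (u v : Word α) (hu : Reduced u) (hv : Reduced v)
    (hne : u ≠ wInv v) :
    (∃ u₁ a s : Word α,
        u = u₁ ++ a ∧
        v = wInv a ++ s ++ crp u v ++ wInv s ++ wInv u₁ ∧
        FreeGroup.reduce (u ++ v) = u₁ ++ s ++ crp u v ++ wInv s ++ wInv u₁) ∨
    (∃ c₁ c₂ t a : Word α,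
        c₁ ≠ [] ∧ c₂ ≠ [] ∧
        crp u v = c₁ ++ c₂ ∧
        u = t ++ c₁ ++ a ∧
        v = wInv a ++ c₂ ++ wInv t ∧
        FreeGroup.reduce (u ++ v) = t ++ c₁ ++ c₂ ++ wInv t ∧
        FreeGroup.reduce (v ++ u) = wInv a ++ c₂ ++ c₁ ++ a ∧
        crp v u = c₂ ++ c₁) ∨
    (∃ v₁ s a : Word α,
        u = wInv v₁ ++ s ++ crp u v ++ wInv s ++ a ∧
        v = wInv a ++ v₁ ∧
        FreeGroup.reduce (u ++ v) = wInv v₁ ++ s ++ crp u v ++ wInv s ++ v₁) := by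
  obtain ⟨u₁, a, v₂, hu12, hv12, hred⟩ :=
    cancel u v (reduced_iff_chain.1 hu) (reduced_iff_chain.1 hv)
  have hchw : List.Chain' NR (u₁ ++ v₂) := hred ▸ chain'_reduce (u ++ v)
  obtain ⟨s, g, hdec, hg⟩ := decomp (u₁ ++ v₂).length _ le_rfl hchw
  have hcrp : crp u v = g := crp_eq hred hdec hg
  rcases le_or_gt u₁.length s.length with hA | hA'
  · -- Case 1
    left
    obtain ⟨s', rfl⟩ : u₁ <+: s :=
      List.prefix_of_prefix_length_le ⟨v₂, rfl⟩
        ⟨g ++ wInv s, by rw [← List.append_assoc, ← hdec]⟩ hA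
    rw [wInv_append] at hdec
    simp only [List.append_assoc] at hdec
    have hv₂ : v₂ = s' ++ (g ++ (wInv s' ++ wInv u₁)) := List.append_cancel_left hdec
    refine ⟨u₁, a, s', hu12, ?_, ?_⟩
    · rw [hcrp, hv12, hv₂] <;> simp
    · rw [hcrp, hred, hv₂] <;> simp
  rcases le_or_gt v₂.length s.length with hC | hC'
  · -- Case 3
    right; right
    obtain ⟨r, hr⟩ : v₂ <:+ wInv s :=
      List.suffix_of_suffix_length_le ⟨u₁, rfl⟩ ⟨s ++ g, by rw [← hdec]⟩
        (by rw [wInv_length]; exact hC)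
    have hs : s = wInv v₂ ++ wInv r := by rw [← wInv_wInv s, ← hr, wInv_append]
    have hu₁ : u₁ = wInv v₂ ++ wInv r ++ g ++ r := by
      rw [← hr, hs] at hdec
      simp only [← List.append_assoc] at hdec
      exact List.append_cancel_right hdec
    refine ⟨v₂, wInv r, a, ?_, hv12, ?_⟩
    · rw [hcrp, wInv_wInv, hu12, hu₁] <;> simp
    · rw [hcrp, wInv_wInv, hred, hu₁] <;> simp
  · -- Case 2
    right; left
    obtain ⟨c₁, rfl⟩ : s <+: u₁ :=
      List.prefix_of_prefix_length_le ⟨g ++ wInv s, by rw [← List.append_assoc, ← hdec]⟩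
        ⟨v₂, rfl⟩ (le_of_lt hA')
    obtain ⟨c₂, rfl⟩ : wInv s <:+ v₂ :=
      List.suffix_of_suffix_length_le ⟨s ++ g, by rw [← hdec]⟩ ⟨s ++ c₁, rfl⟩
        (by rw [wInv_length]; omega)
    have hc₁ : c₁ ≠ [] := by
      intro h; rw [h] at hA'; simp at hA'
    have hc₂ : c₂ ≠ [] := by
      intro h; rw [h] at hC'; simp [wInv_length] at hC'
    have hgc : g = c₁ ++ c₂ := by
      have h1 := hdec
      simp only [List.append_assoc] at h1
      have h2 := List.append_cancel_left h1
      simp only [← List.append_assoc] at h2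
      exact (List.append_cancel_right h2).symm
    -- letters at the junctions
    obtain ⟨p, c₁', rfl⟩ := List.exists_cons_of_ne_nil hc₁
    obtain ⟨q, c₂', rfl⟩ := List.exists_cons_of_ne_nil hc₂
    have hchu : List.Chain' NR (s ++ (p :: c₁') ++ a) := hu12 ▸ reduced_iff_chain.1 hu
    have hchv : List.Chain' NR (wInv a ++ (q :: c₂' ++ wInv s)) :=
      hv12 ▸ reduced_iff_chain.1 hv
    have hchg : List.Chain' NR (p :: c₁' ++ q :: c₂') := by
      rw [← hgc]
      exact hchw.infix ⟨s, wInv s, by simp [hgc]⟩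
    -- NR (last c₂) p  from cyclic reducedness of g
    have hcyc1 : ∀ z ∈ (q :: c₂').getLast?, NR z p := by
      intro z hz
      have h0 := hg p (c₁' ++ q :: c₂') (by rw [hgc]; rfl)
      rw [List.getLast?_append, Option.mem_def.1 hz] at h0
      simp only [Option.some_or, ne_eq, Option.some.injEq] at h0
      exact NR.flip h0
    -- NR (last c₁) q from chain' of g
    have hcyc2 : ∀ z ∈ (p :: c₁').getLast?, NR z q := by
      intro z hz
      exact (List.isChain_append.1 hchg).2.2 z hz q rfl
    -- the key reduced word
    have hK : List.Chain' NR ((wInv a ++ q :: c₂') ++ (p :: c₁' ++ a)) := by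
      apply List.IsChain.append
      · exact hchv.prefix ⟨wInv s, by simp⟩
      · exact hchu.suffix ⟨s, by simp⟩
      · intro z hz y hy
        rw [List.getLast?_append] at hz
        cases hly : (q :: c₂').getLast? with
        | none => simp at hly
        | some w' =>
          rw [hly] at hz
          simp only [Option.some_or, Option.mem_def, Option.some.injEq] at hz
          subst hz
          simp only [List.cons_append, List.head?_cons, Option.mem_def,
            Option.some.injEq] at hy
          subst hy
          exact hcyc1 _ hly
    have hredvu : FreeGroup.reduce (v ++ u) = wInv a ++ q :: c₂' ++ p :: c₁' ++ a := by
      have hvu : v ++ u = (wInv a ++ q :: c₂') ++ wInv s ++ s ++ (p :: c₁' ++ a) := by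
        rw [hv12, hu12]; simp
      rw [hvu, reduce_cancel, reduce_of_chain hK]
      simp
    have hcycg' : CycRed (q :: c₂' ++ p :: c₁') := by
      intro y ys hys
      simp only [List.cons_append] at hys
      injection hys with h1 h2
      subst h1; subst h2
      rw [List.getLast?_append]
      cases hly : (p :: c₁').getLast? with
      | none => simp at hly
      | some w' =>
        simp only [Option.some_or, ne_eq, Option.some.injEq]
        exact NR.flip (hcyc2 w' hly)
    have hcrpvu : crp v u = q :: c₂' ++ p :: c₁' := by
      refine crp_eq (s := wInv a) hredvu ?_ hcycg'
      rw [wInv_wInv] <;> simp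
    refine ⟨p :: c₁', q :: c₂', s, a, by simp, by simp, by rw [hcrp]; exact hgc,
      hu12, by rw [hv12]; simp, ?_, hredvu, hcrpvu⟩
    rw [hred]; simp
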